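/- Let u : EuclideanSpace ℝ (Fin 3) → ℝ be twice continuously differentiable and harmonic on an open set Ω, with ∇u(p) ≠ 0 for all p ∈ Ω. Let φ : ℝ → EuclideanSpace ℝ (Fin 3) map an interval [0, L] into Ω and satisfy φ'(s) = N(φ(s)) for all s ∈ [0, L], where N(p) = ∇u(p)/‖∇u(p)‖. Then for every s ∈ [0, L], ‖∇u(φ(s))‖ = ‖∇u(φ(0))‖ · exp(2 ∫₀ˢ H(φ(t)) dt), where H(p) = (Q(p)(N(p), N(p)) − Δu(p)) / (2‖∇u(p)‖). -/

import Mathlib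

open Set

/-- The Hessian bilinear form of `u` at `p`, applied to `(v, w)`. -/
noncomputable def hessianForm (u : EuclideanSpace ℝ (Fin 3) → ℝ)
    (p v w : EuclideanSpace ℝ (Fin 3)) : ℝ :=
  fderiv ℝ (fderiv ℝ u) p v w

/-- The Laplacian of `u` at `p`: the trace of the Hessian. -/
noncomputable def laplacianAt (u : EuclideanSpace ℝ (Fin 3) → ℝ)
    (p : EuclideanSpace ℝ (Fin 3)) : ℝ :=
  ∑ i, hessianForm u p (EuclideanSpace.single i 1) (EuclideanSpace.single i 1)

/-- The unit normal `N(p) = ∇u(p)/‖∇u(p)‖`. -/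
noncomputable def unitNormal (u : EuclideanSpace ℝ (Fin 3) → ℝ)
    (p : EuclideanSpace ℝ (Fin 3)) : EuclideanSpace ℝ (Fin 3) :=
  ‖gradient u p‖⁻¹ • gradient u p

/-- The mean curvature `H(p) = (Q(p)(N,N) − Δu(p)) / (2‖∇u(p)‖)` of the level
surface of `u` through `p`. -/
noncomputable def meanCurvature (u : EuclideanSpace ℝ (Fin 3) → ℝ)
    (p : EuclideanSpace ℝ (Fin 3)) : ℝ :=
  (hessianForm u p (unitNormal u p) (unitNormal u p) - laplacianAt u p) /
    (2 * ‖gradient u p‖)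

local notation "E" => EuclideanSpace ℝ (Fin 3)
local notation "⟪" x ", " y "⟫" => @inner ℝ _ _ x y

theorem gradient_norm_eq_exp_integral_meanCurvature_dim3
    (u : EuclideanSpace ℝ (Fin 3) → ℝ)
    (Ω : Set (EuclideanSpace ℝ (Fin 3))) (hΩ : IsOpen Ω)
    (hu : ContDiffOn ℝ 2 u Ω)
    (hharm : ∀ p ∈ Ω, laplacianAt u p = 0)
    (hgrad : ∀ p ∈ Ω, gradient u p ≠ 0)
    (φ : ℝ → EuclideanSpace ℝ (Fin 3)) (L : ℝ)
    (hmap : ∀ s ∈ Icc (0 : ℝ) L, φ s ∈ Ω)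
    (hflow : ∀ s ∈ Icc (0 : ℝ) L, HasDerivAt φ (unitNormal u (φ s)) s)
    (s : ℝ) (hs : s ∈ Icc (0 : ℝ) L) :
    ‖gradient u (φ s)‖ = ‖gradient u (φ 0)‖ *
      Real.exp (2 * ∫ t in (0 : ℝ)..s, meanCurvature u (φ t)) := by
  have hC1 : ContDiffOn ℝ 1 (fderiv ℝ u) Ω := hu.fderiv_of_isOpen hΩ (by norm_num)
  set e := (InnerProductSpace.toDual ℝ E).symm with he
  have hgradeq : ∀ x, gradient u x = e (fderiv ℝ u x) := fun x => rfl
  -- derivative of log ‖grad (φ t)‖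
  have hderiv : ∀ t ∈ Icc (0:ℝ) L,
      HasDerivAt (fun τ => Real.log ‖gradient u (φ τ)‖) (2 * meanCurvature u (φ t)) t := by
    intro t ht
    have hp : φ t ∈ Ω := hmap t ht
    set p := φ t with hpdef
    have hGp : gradient u p ≠ 0 := hgrad p hp
    have hnorm : ‖gradient u p‖ ≠ 0 := norm_ne_zero_iff.mpr hGp
    have hA : DifferentiableAt ℝ (fderiv ℝ u) p :=
      (hC1.contDiffAt (hΩ.mem_nhds hp)).differentiableAt one_ne_zero
    have h1 : HasDerivAt (fun τ => fderiv ℝ u (φ τ))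
        (fderiv ℝ (fderiv ℝ u) p (unitNormal u p)) t :=
      hA.hasFDerivAt.comp_hasDerivAt t (hflow t ht)
    have h2 : HasDerivAt (fun τ => gradient u (φ τ))
        (e (fderiv ℝ (fderiv ℝ u) p (unitNormal u p))) t := by
      simp only [hgradeq]
      exact (e.toContinuousLinearEquiv.hasFDerivAt).comp_hasDerivAt t h1
    set G' := e (fderiv ℝ (fderiv ℝ u) p (unitNormal u p)) with hG'
    have hinner : ⟪gradient u p, G'⟫ =
        ‖gradient u p‖ * hessianForm u p (unitNormal u p) (unitNormal u p) := by
      rw [real_inner_comm, hG', InnerProductSpace.toDual_symm_apply]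
      have : gradient u p = ‖gradient u p‖ • unitNormal u p := by
        rw [unitNormal, smul_smul, mul_inv_cancel₀ hnorm, one_smul]
      conv_lhs => rw [this]
      simp [hessianForm]
    have h3 : HasDerivAt (fun τ => ⟪gradient u (φ τ), gradient u (φ τ)⟫)
        (2 * ⟪gradient u p, G'⟫) t := by
      have := h2.inner ℝ h2
      exact this.congr_deriv (by rw [hpdef, real_inner_comm (gradient u (φ t)) G']; ring)
    have hinnerself : ⟪gradient u p, gradient u p⟫ ≠ 0 := by
      rw [real_inner_self_eq_norm_mul_norm]
      positivity
    have h4 : HasDerivAt (fun τ => ‖gradient u (φ τ)‖)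
        (hessianForm u p (unitNormal u p) (unitNormal u p)) t := by
      have h := h3.sqrt hinnerself
      have heq : (fun τ => Real.sqrt ⟪gradient u (φ τ), gradient u (φ τ)⟫) =
          fun τ => ‖gradient u (φ τ)‖ := by
        funext τ
        rw [real_inner_self_eq_norm_mul_norm, Real.sqrt_mul_self (norm_nonneg _)]
      rw [heq] at h
      convert h using 1
      rw [hinner, real_inner_self_eq_norm_mul_norm, Real.sqrt_mul_self (norm_nonneg _)]
      field_simp
      rw [← hpdef, mul_div_assoc, div_self hnorm, mul_one]
    have h5 := h4.log hnorm
    convert h5 using 1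
    rw [meanCurvature, hharm p hp]
    field_simp
    rw [← hpdef, sub_zero, mul_div_assoc, div_self hnorm, mul_one]
  -- continuity of the integrand
  have hφc : ContinuousOn φ (Icc 0 L) := fun t ht => ((hflow t ht).continuousAt).continuousWithinAt
  have hGc : ContinuousOn (gradient u) Ω := by
    have h := hu.continuousOn_fderiv_of_isOpen hΩ (by norm_num)
    have : gradient u = fun x => e (fderiv ℝ u x) := rfl
    rw [this]
    exact e.continuous.comp_continuousOn h
  have hHc : ContinuousOn (fderiv ℝ (fderiv ℝ u)) Ω :=
    hC1.continuousOn_fderiv_of_isOpen hΩ le_rfl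
  have hnormc : ContinuousOn (fun p => ‖gradient u p‖) Ω := hGc.norm
  have hNc : ContinuousOn (unitNormal u) Ω := by
    apply ContinuousOn.smul (f := fun p => ‖gradient u p‖⁻¹) (g := gradient u)
    · exact hnormc.inv₀ fun p hp => norm_ne_zero_iff.mpr (hgrad p hp)
    · exact hGc
  have hMc : ContinuousOn (meanCurvature u) Ω := by
    apply ContinuousOn.div
    · apply ContinuousOn.sub
      · exact ((hHc.clm_apply hNc).clm_apply hNc)
      · apply continuousOn_finset_sum
        intro i _
        exact (hHc.clm_apply continuousOn_const).clm_apply continuousOn_const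
    · exact continuousOn_const.mul hnormc
    · intro p hp
      have := norm_ne_zero_iff.mpr (hgrad p hp)
      positivity
  have hsub : Icc (0:ℝ) s ⊆ Icc 0 L := Icc_subset_Icc le_rfl hs.2
  have hcont : ContinuousOn (fun t => 2 * meanCurvature u (φ t)) (uIcc 0 s) := by
    rw [uIcc_of_le hs.1]
    exact continuousOn_const.mul (hMc.comp (hφc.mono hsub) fun t ht => hmap t (hsub ht))
  have hFTC := intervalIntegral.integral_eq_sub_of_hasDerivAt
    (f := fun τ => Real.log ‖gradient u (φ τ)‖)
    (f' := fun t => 2 * meanCurvature u (φ t))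
    (fun t ht => hderiv t (hsub (by rwa [uIcc_of_le hs.1] at ht)))
    (hcont.intervalIntegrable)
  have hint : 2 * ∫ t in (0:ℝ)..s, meanCurvature u (φ t) =
      Real.log ‖gradient u (φ s)‖ - Real.log ‖gradient u (φ 0)‖ := by
    rw [← hFTC, intervalIntegral.integral_const_mul]
  rw [hint]
  have h0 : (0:ℝ) ∈ Icc (0:ℝ) L := ⟨le_rfl, le_trans hs.1 hs.2⟩
  have hns : ‖gradient u (φ s)‖ ≠ 0 := norm_ne_zero_iff.mpr (hgrad _ (hmap s hs))
  have hn0 : (0:ℝ) < ‖gradient u (φ 0)‖ := norm_pos_iff.mpr (hgrad _ (hmap 0 h0))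
  rw [Real.exp_sub, Real.exp_log (lt_of_le_of_ne (norm_nonneg _) (Ne.symm hns)),
    Real.exp_log hn0]
  field_simp
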